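/- arXiv:math/0209076 — 3 statements merged into one kernel-verified Lean document; each statement's English description precedes it below -/
import Mathlib

section
/- Let (A_n, u_n)_{n∈ℕ} be an inverse system of groups indexed by ℕ. Define lim¹ A_n as the set of orbits of the action of ∏_n A_n on ∏_n A_n given by (a_n)·(x_n) = (a_n · x_n · u_{n+1}(a_{n+1})⁻¹). If the system satisfies the Mittag-Leffler condition (for each m, the decreasing chain of images of A_n in A_m for n ≥ m is eventually constant), then lim¹ A_n is trivial (consists of a single orbit). -/
section Lim1Defs

variable {A : ℕ → Type} [∀ n, Group (A n)]

/-- The relation on `∏ n, A n` whose orbit space is `lim¹ A n`: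
`(a_n)` acts on `(x_n)` by `(a_n * x_n * (u_{n+1} a_{n+1})⁻¹)_n`. -/
def lim1Rel (u : ∀ n, A (n + 1) →* A n) (x y : ∀ n, A n) : Prop :=
  ∃ a : ∀ n, A n, ∀ n, y n = a n * x n * (u n (a (n + 1)))⁻¹

/-- `lim¹` of an inverse system of groups indexed by `ℕ`. -/
def Lim1 (u : ∀ n, A (n + 1) →* A n) : Type :=
  Quot (lim1Rel u)

/-- The composite transition map `A (m + n) →* A m` of an inverse system. -/
def transMap (u : ∀ n, A (n + 1) →* A n) (m : ℕ) : ∀ n, A (m + n) →* A m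
  | 0 => MonoidHom.id _
  | n + 1 => (transMap u m n).comp (u (m + n))

/-- The Mittag-Leffler condition: for each `m`, the decreasing chain of images of the `A n`
in `A m` is eventually constant. -/
def MittagLeffler (u : ∀ n, A (n + 1) →* A n) : Prop :=
  ∀ m, ∃ N, ∀ n, N ≤ n → Set.range ⇑(transMap u m n) = Set.range ⇑(transMap u m N)

end Lim1Defs

section Aux

variable {A : ℕ → Type} [∀ n, Group (A n)] (u : ∀ n, A (n + 1) →* A n) (x : ∀ n, A n)

/-- The set of values `c ∈ A n` admitting a partial solution of length `k` of the
recursion `b j = x j * u j (b (j+1))` starting at `b n = c`. -/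
def Tset (n k : ℕ) : Set (A n) :=
  {c | ∃ b : ∀ j, A j, b n = c ∧ ∀ j, n ≤ j → j < n + k → b j = x j * u j (b (j + 1))}

lemma T_zero (n : ℕ) : Tset u x n 0 = Set.univ := by
  ext c
  simp only [Tset, Set.mem_setOf_eq, Set.mem_univ, iff_true]
  exact ⟨Function.update (fun j => 1) n c, Function.update_self _ _ _,
    fun j h1 h2 => by omega⟩

lemma T_anti (n : ℕ) {k k' : ℕ} (h : k ≤ k') : Tset u x n k' ⊆ Tset u x n k := by
  rintro c ⟨b, h1, h2⟩
  exact ⟨b, h1, fun j hj1 hj2 => h2 j hj1 (by omega)⟩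

lemma T_succ (n k : ℕ) :
    Tset u x n (k + 1) = (fun z => x n * u n z) '' Tset u x (n + 1) k := by
  ext c
  constructor
  · rintro ⟨b, rfl, hb⟩
    exact ⟨b (n + 1), ⟨b, rfl, fun j h1 h2 => hb j (by omega) (by omega)⟩,
      (hb n le_rfl (by omega)).symm⟩
  · rintro ⟨z, ⟨b, hbz, hb⟩, rfl⟩
    refine ⟨Function.update b n (x n * u n (b (n + 1))), ?_, ?_⟩
    · rw [Function.update_self, hbz]
    · intro j h1 h2
      rcases eq_or_lt_of_le h1 with rfl | h1'
      · rw [Function.update_self, Function.update_of_ne (by omega)]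
      · rw [Function.update_of_ne (by omega), Function.update_of_ne (by omega)]
        exact hb j (by omega) (by omega)

lemma T_nonempty (k : ℕ) : ∀ n, (Tset u x n k).Nonempty := by
  induction k with
  | zero => intro n; rw [T_zero]; exact Set.univ_nonempty
  | succ k ih => intro n; rw [T_succ]; exact ((ih (n + 1)).image _)

lemma u_cast {m m' : ℕ} (e : m = m') (g : A (m + 1)) :
    u m' (cast (congrArg (fun i => A (i + 1)) e) g) = cast (congrArg A e) (u m g) := by
  subst e; rfl

lemma transMap_cast (k : ℕ) : ∀ (n : ℕ) (g : A (n + 1 + k)),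
    transMap u n (k + 1) (cast (congrArg A (Nat.add_right_comm n 1 k)) g)
      = u n (transMap u (n + 1) k g) := by
  induction k with
  | zero =>
    intro n g
    show u n (cast _ g) = u n g
    exact congrArg (u n) (eq_of_heq (cast_heq _ g))
  | succ k ih =>
    intro n g
    have e : n + 1 + k = n + k + 1 := Nat.add_right_comm n 1 k
    have key : u (n + (k + 1)) (cast (congrArg A (Nat.add_right_comm n 1 (k + 1))) g)
        = cast (congrArg A e) (u (n + 1 + k) g) := u_cast u e g
    show transMap u n (k + 1) (u (n + (k + 1)) (cast _ g))
      = u n (transMap u (n + 1) k (u (n + 1 + k) g))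
    rw [key]
    exact ih n (u (n + 1 + k) g)

lemma range_succ (k n : ℕ) :
    Set.range ⇑(transMap u n (k + 1)) = ⇑(u n) '' Set.range ⇑(transMap u (n + 1) k) := by
  ext y
  simp only [Set.mem_range, Set.mem_image]
  constructor
  · rintro ⟨g, rfl⟩
    refine ⟨transMap u (n + 1) k (cast (congrArg A (Nat.add_right_comm n 1 k)).symm g),
      ⟨_, rfl⟩, ?_⟩
    rw [← transMap_cast u k n (cast (congrArg A (Nat.add_right_comm n 1 k)).symm g)]
    congr 1
    exact eq_of_heq ((cast_heq _ _).trans (cast_heq _ g))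
  · rintro ⟨w, ⟨g, rfl⟩, rfl⟩
    exact ⟨cast (congrArg A (Nat.add_right_comm n 1 k)) g, transMap_cast u k n g⟩

lemma T_coset (k : ℕ) : ∀ (n : ℕ) (c : A n), c ∈ Tset u x n k →
    Tset u x n k = (fun w => c * w) '' Set.range ⇑(transMap u n k) := by
  induction k with
  | zero =>
    intro n c _
    rw [T_zero]
    symm
    ext z
    simp only [Set.mem_image, Set.mem_range, Set.mem_univ, iff_true]
    exact ⟨c⁻¹ * z, ⟨c⁻¹ * z, rfl⟩, by group⟩
  | succ k ih =>
    intro n c hc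
    rw [T_succ] at hc
    obtain ⟨c₁, hc₁, rfl⟩ := hc
    rw [T_succ, ih (n + 1) c₁ hc₁, range_succ]
    ext z
    simp only [Set.mem_image, Set.mem_range]
    constructor
    · rintro ⟨w, ⟨w', ⟨g, rfl⟩, rfl⟩, rfl⟩
      exact ⟨u n (transMap u (n + 1) k g), ⟨transMap u (n + 1) k g, ⟨g, rfl⟩, rfl⟩,
        by rw [map_mul, mul_assoc]⟩
    · rintro ⟨w, ⟨w', ⟨g, rfl⟩, rfl⟩, rfl⟩
      exact ⟨c₁ * transMap u (n + 1) k g, ⟨transMap u (n + 1) k g, ⟨g, rfl⟩, rfl⟩,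
        by rw [map_mul, mul_assoc]⟩

/-- Recursive choice of a compatible chain through a system of nonempty sets. -/
noncomputable def chainF (S : ∀ n, Set (A n)) (h0 : (S 0).Nonempty)
    (hs : ∀ n z, z ∈ S n → ∃ z' ∈ S (n + 1), z = x n * u n z') :
    ∀ n, {z : A n // z ∈ S n}
  | 0 => ⟨h0.choose, h0.choose_spec⟩
  | n + 1 =>
    ⟨(hs n (chainF S h0 hs n).1 (chainF S h0 hs n).2).choose,
      (hs n (chainF S h0 hs n).1 (chainF S h0 hs n).2).choose_spec.1⟩

lemma chainF_spec (S : ∀ n, Set (A n)) (h0 : (S 0).Nonempty)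
    (hs : ∀ n z, z ∈ S n → ∃ z' ∈ S (n + 1), z = x n * u n z') (n : ℕ) :
    (chainF u x S h0 hs n).1 = x n * u n ((chainF u x S h0 hs (n + 1)).1) := by
  exact (hs n (chainF u x S h0 hs n).1 (chainF u x S h0 hs n).2).choose_spec.2

end Aux

/-- If an inverse system of groups indexed by `ℕ` satisfies the Mittag-Leffler condition,
then `lim¹ A_n` is trivial (a single orbit). -/
theorem statement_0 {A : ℕ → Type} [∀ n, Group (A n)] (u : ∀ n, A (n + 1) →* A n)
    (hML : MittagLeffler u) : Subsingleton (Lim1 u) := by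
  choose N hN using hML
  have key : ∀ x : ∀ n, A n, Quot.mk (lim1Rel u) x = Quot.mk (lim1Rel u) 1 := by
    intro x
    have hstab : ∀ n k, N n ≤ k → Tset u x n k = Tset u x n (N n) := by
      intro n k hk
      obtain ⟨c, hc⟩ := T_nonempty u x k n
      have hc' : c ∈ Tset u x n (N n) := T_anti u x n hk hc
      rw [T_coset u x k n c hc, T_coset u x (N n) n c hc', hN n k hk]
    have hs : ∀ n z, z ∈ Tset u x n (N n) →
        ∃ z' ∈ Tset u x (n + 1) (N (n + 1)), z = x n * u n z' := by
      intro n z hz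
      have h1 : Tset u x n (N n) = Tset u x n (max (N n) (N (n + 1)) + 1) :=
        (hstab n _ (by omega)).symm
      rw [h1, T_succ] at hz
      obtain ⟨z', hz', rfl⟩ := hz
      refine ⟨z', ?_, rfl⟩
      rw [← hstab (n + 1) _ (le_max_right (N n) (N (n + 1)))]
      exact hz'
    set c : ∀ n, A n := fun n => (chainF u x (fun n => Tset u x n (N n))
      (T_nonempty u x (N 0) 0) hs n).1 with hc
    have hcrec : ∀ n, c n = x n * u n (c (n + 1)) := fun n =>
      chainF_spec u x (fun n => Tset u x n (N n)) (T_nonempty u x (N 0) 0) hs n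
    apply Quot.sound
    refine ⟨fun n => (c n)⁻¹, fun n => ?_⟩
    show (1 : A n) = (c n)⁻¹ * x n * (u n ((c (n + 1))⁻¹))⁻¹
    rw [map_inv, inv_inv, mul_assoc, ← hcrec n, inv_mul_cancel]
  have hall : ∀ p : Lim1 u, p = Quot.mk (lim1Rel u) 1 := fun p => @Quot.ind _ (lim1Rel u) (fun q => q = Quot.mk (lim1Rel u) 1) key p
  exact ⟨fun p q => (hall p).trans (hall q).symm⟩
end

section
/- Let (A_n, u_n)_{n∈ℕ} be an inverse system of countable groups indexed by ℕ. If the system fails the Mittag-Leffler condition, then lim¹ A_n is uncountable. -/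
section Aux

variable {A : ℕ → Type} [∀ n, Group (A n)]

/-- The image subgroup `Im (A (m+k) → A m)`. -/
def Bsub (u : ∀ n, A (n + 1) →* A n) (m k : ℕ) : Subgroup (A m) := (transMap u m k).range

lemma Bsub_succ_le (u : ∀ n, A (n + 1) →* A n) (m k : ℕ) :
    Bsub u m (k + 1) ≤ Bsub u m k := by
  rintro _ ⟨z, rfl⟩
  exact ⟨u (m + k) z, rfl⟩

lemma Bsub_antitone (u : ∀ n, A (n + 1) →* A n) (m : ℕ) {k l : ℕ} (h : k ≤ l) :
    Bsub u m l ≤ Bsub u m k := by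
  induction l with
  | zero => simp_all
  | succ l ih =>
    rcases Nat.lt_or_ge k (l + 1) with h' | h'
    · exact (Bsub_succ_le u m l).trans (ih (Nat.lt_succ_iff.mp h'))
    · have : k = l + 1 := le_antisymm h h'
      subst this; exact le_rfl

/-- Partial products of images: the key invariant of a sequence. -/
def Qseq (u : ∀ n, A (n + 1) →* A n) (m : ℕ) (x : ∀ i, A i) : ℕ → A m
  | 0 => 1
  | k + 1 => Qseq u m x k * transMap u m k (x (m + k))

/-- Equivariance of `Qseq` under the `lim¹` relation. -/
lemma rel_imp (u : ∀ n, A (n + 1) →* A n) (m : ℕ) {x y : ∀ i, A i} (h : lim1Rel u x y) :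
    ∃ a : A m, ∀ k, (a * Qseq u m x k)⁻¹ * Qseq u m y k ∈ Bsub u m k := by
  obtain ⟨a, ha⟩ := h
  refine ⟨a m, fun k => ?_⟩
  have hQ : ∀ k, Qseq u m y k = a m * Qseq u m x k * (transMap u m k (a (m + k)))⁻¹ := by
    intro k
    induction k with
    | zero =>
      show (1 : A m) = a m * 1 * (a m)⁻¹
      group
    | succ k ih =>
      have hy : transMap u m k (y (m + k)) =
          transMap u m k (a (m + k)) * transMap u m k (x (m + k)) *
            (transMap u m (k + 1) (a (m + (k + 1))))⁻¹ := by
        rw [ha (m + k)]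
        rw [map_mul, map_mul, map_inv]
        rfl
      show Qseq u m y k * transMap u m k (y (m + k)) =
        a m * (Qseq u m x k * transMap u m k (x (m + k))) *
          (transMap u m (k + 1) (a (m + (k + 1))))⁻¹
      rw [hy, ih]
      group
  have heq : (a m * Qseq u m x k)⁻¹ * Qseq u m y k = (transMap u m k (a (m + k)))⁻¹ := by
    rw [hQ k]; group
  rw [heq]
  exact inv_mem ⟨a (m + k), rfl⟩

/-- `Qseq`-equivariance transported along `EqvGen`. -/
lemma eqvGen_imp (u : ∀ n, A (n + 1) →* A n) (m : ℕ) {x y : ∀ i, A i}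
    (h : Relation.EqvGen (lim1Rel u) x y) :
    ∃ a : A m, ∀ k, (a * Qseq u m x k)⁻¹ * Qseq u m y k ∈ Bsub u m k := by
  induction h with
  | rel x y hxy => exact rel_imp u m hxy
  | refl x => exact ⟨1, fun k => by simpa using one_mem (Bsub u m k)⟩
  | symm x y _ ih =>
    obtain ⟨a, ha⟩ := ih
    refine ⟨a⁻¹, fun k => ?_⟩
    have heq : (a⁻¹ * Qseq u m y k)⁻¹ * Qseq u m x k =
        ((a * Qseq u m x k)⁻¹ * Qseq u m y k)⁻¹ := by group
    rw [heq]
    exact inv_mem (ha k)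
  | trans x y z _ _ ih1 ih2 =>
    obtain ⟨a, ha⟩ := ih1
    obtain ⟨b, hb⟩ := ih2
    refine ⟨b * a, fun k => ?_⟩
    have heq : ((b * a) * Qseq u m x k)⁻¹ * Qseq u m z k =
        ((a * Qseq u m x k)⁻¹ * Qseq u m y k) *
          ((b * Qseq u m y k)⁻¹ * Qseq u m z k) := by group
    rw [heq]
    exact mul_mem (ha k) (hb k)

/-- Extend a sequence defined on indices `m + k` to all indices. -/
def shiftSeq (m : ℕ) (y : ∀ k, A (m + k)) (i : ℕ) : A i :=
  if h : m ≤ i then (Nat.add_sub_cancel' h ▸ y (i - m)) else 1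

lemma shiftSeq_add (m : ℕ) (y : ∀ k, A (m + k)) (k : ℕ) :
    shiftSeq m y (m + k) = y k := by
  have h : m ≤ m + k := Nat.le_add_right _ _
  rw [shiftSeq, dif_pos h]
  have key : ∀ (j : ℕ) (e : m + j = m + k), (e ▸ y j : A (m + k)) = y k := by
    intro j e
    have hjk : j = k := by omega
    subst hjk
    rfl
  exact key _ _

end Aux

/-- If an inverse system of countable groups indexed by `ℕ` fails the Mittag-Leffler
condition, then `lim¹ A_n` is uncountable. -/
theorem statement_1 {A : ℕ → Type} [∀ n, Group (A n)] [∀ n, Countable (A n)]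
    (u : ∀ n, A (n + 1) →* A n) (hML : ¬ MittagLeffler u) : Uncountable (Lim1 u) := by
  classical
  rw [← not_countable_iff]
  intro hcount
  unfold MittagLeffler at hML
  push_neg at hML
  obtain ⟨m, hm⟩ := hML
  -- translate to subgroups and strict inequality
  have hB : ∀ N, ∃ n, N < n ∧ Bsub u m n < Bsub u m N := by
    intro N
    obtain ⟨n, hn, hne⟩ := hm N
    have hne' : Bsub u m n ≠ Bsub u m N := by
      intro h
      apply hne
      have := congrArg (fun s : Subgroup (A m) => (s : Set (A m))) h
      simpa [Bsub, MonoidHom.coe_range] using this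
    have hlt : N < n := lt_of_le_of_ne hn (fun h => hne' (by rw [h]))
    exact ⟨n, hlt, lt_of_le_of_ne (Bsub_antitone u m hn) hne'⟩
  -- drop levels
  let nf : ℕ → ℕ := fun k => Nat.rec 0 (fun _ prev => (hB prev).choose) k
  have nf_lt : ∀ k, nf k < nf (k + 1) := fun k => ((hB (nf k)).choose_spec).1
  have nf_drop : ∀ k, Bsub u m (nf (k + 1)) < Bsub u m (nf k) := fun k =>
    ((hB (nf k)).choose_spec).2
  have nf_mono : StrictMono nf := strictMono_nat_of_lt_succ nf_lt
  have nf_zero : nf 0 = 0 := rfl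
  -- separating elements
  have hg : ∀ k, ∃ g, g ∈ Bsub u m (nf k) ∧ g ∉ Bsub u m (nf (k + 1)) :=
    fun k => SetLike.exists_of_lt (nf_drop k)
  let gf : ℕ → A m := fun k => (hg k).choose
  have gf_mem : ∀ k, gf k ∈ Bsub u m (nf k) := fun k => (hg k).choose_spec.1
  have gf_not : ∀ k, gf k ∉ Bsub u m (nf (k + 1)) := fun k => (hg k).choose_spec.2
  -- the "coefficient" sequences, by choice
  have hchoice : ∀ (ε : ℕ → Bool) (j : ℕ), ∃ g : A m, g ∈ Bsub u m j ∧
      ((∀ k, nf k ≠ j) → g = 1) ∧ (∀ k, nf k = j → g = (if ε k then gf k else 1)) := by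
    intro ε j
    rcases Classical.em (∃ k, nf k = j) with h | h
    · obtain ⟨k, hk⟩ := h
      refine ⟨if ε k then gf k else 1, ?_, ?_, ?_⟩
      · cases hε : ε k
        · rw [if_neg Bool.false_ne_true]
          exact one_mem _
        · rw [if_pos rfl, ← hk]
          exact gf_mem k
      · intro h'; exact absurd hk (h' k)
      · intro k' hk'
        have : k' = k := nf_mono.injective (hk'.trans hk.symm)
        rw [this]
    · exact ⟨1, one_mem _, fun _ => rfl, fun k hk => absurd ⟨k, hk⟩ h⟩
  let w : (ℕ → Bool) → ℕ → A m := fun ε j => (hchoice ε j).choose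
  have w_mem : ∀ ε j, w ε j ∈ Bsub u m j := fun ε j => (hchoice ε j).choose_spec.1
  have w_off : ∀ ε j, (∀ k, nf k ≠ j) → w ε j = 1 := fun ε j =>
    (hchoice ε j).choose_spec.2.1
  have w_at : ∀ ε k, w ε (nf k) = if ε k then gf k else 1 := fun ε k =>
    (hchoice ε (nf k)).choose_spec.2.2 k rfl
  -- lift w to the product
  have w_range : ∀ ε j, ∃ z : A (m + j), transMap u m j z = w ε j := fun ε j => w_mem ε j
  let yf : (ℕ → Bool) → ∀ j, A (m + j) := fun ε j => (w_range ε j).choose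
  have yf_spec : ∀ ε j, transMap u m j (yf ε j) = w ε j := fun ε j => (w_range ε j).choose_spec
  let xf : (ℕ → Bool) → ∀ i, A i := fun ε => shiftSeq m (yf ε)
  have Qx : ∀ ε j, Qseq u m (xf ε) (j + 1) = Qseq u m (xf ε) j * w ε j := by
    intro ε j
    show Qseq u m (xf ε) j * transMap u m j (xf ε (m + j)) = _
    rw [show xf ε (m + j) = yf ε j from shiftSeq_add m (yf ε) j, yf_spec]
  -- the thread values at drop levels
  let D : (ℕ → Bool) → ℕ → A m := fun ε k => Qseq u m (xf ε) (nf k)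
  have D_zero : ∀ ε, D ε 0 = 1 := by
    intro ε
    show Qseq u m (xf ε) (nf 0) = 1
    rw [nf_zero]
    rfl
  have gap : ∀ ε k j, nf k < j → j ≤ nf (k + 1) →
      Qseq u m (xf ε) j = D ε k * w ε (nf k) := by
    intro ε k j hj1 hj2
    induction j with
    | zero => omega
    | succ j ih =>
      rcases Nat.lt_or_ge (nf k) j with h | h
      · have hjlt : j < nf (k + 1) := by omega
        have hwj : w ε j = 1 := by
          apply w_off
          intro k' hk'
          have h1 : k < k' := nf_mono.lt_iff_lt.mp (hk' ▸ h)
          have h2 : k' < k + 1 := nf_mono.lt_iff_lt.mp (hk' ▸ hjlt)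
          omega
        rw [Qx, ih h (by omega), hwj, mul_one]
      · have hje : j = nf k := by omega
        subst hje
        rw [Qx]
  have D_succ : ∀ ε k, D ε (k + 1) = D ε k * (if ε k then gf k else 1) := by
    intro ε k
    have h := gap ε k (nf (k + 1)) (nf_lt k) le_rfl
    rw [w_at ε k] at h
    exact h
  -- D depends only on the initial segment
  have D_agree : ∀ (ε₁ ε₂ : ℕ → Bool) (k : ℕ), (∀ j, j < k → ε₁ j = ε₂ j) →
      D ε₁ k = D ε₂ k := by
    intro ε₁ ε₂ k
    induction k with
    | zero => intro _; rw [D_zero, D_zero]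
    | succ k ih =>
      intro h
      rw [D_succ, D_succ, ih (fun j hj => h j (by omega)), h k (by omega)]
  -- separation
  have sep : ∀ (ε₁ ε₂ : ℕ → Bool),
      (∀ k, (D ε₁ k)⁻¹ * D ε₂ k ∈ Bsub u m (nf k)) → ε₁ = ε₂ := by
    intro ε₁ ε₂ hmem
    funext k
    induction k using Nat.strong_induction_on with
    | _ k ih =>
      by_contra hne
      have hDk : D ε₁ k = D ε₂ k := D_agree ε₁ ε₂ k (fun j hj => ih j hj)
      have h1 := hmem (k + 1)
      rw [D_succ, D_succ, hDk] at h1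
      have key : ((D ε₂ k * (if ε₁ k then gf k else 1))⁻¹ *
          (D ε₂ k * (if ε₂ k then gf k else 1)) : A m) =
          (if ε₁ k then gf k else 1)⁻¹ * (if ε₂ k then gf k else 1) := by
        group
      rw [key] at h1
      cases hb1 : ε₁ k <;> cases hb2 : ε₂ k
      · exact hne (hb1.trans hb2.symm)
      · rw [hb1, hb2, if_neg Bool.false_ne_true, if_pos rfl, inv_one, one_mul] at h1
        exact gf_not k h1
      · rw [hb1, hb2, if_pos rfl, if_neg Bool.false_ne_true, mul_one] at h1
        exact gf_not k (inv_mem_iff.mp h1)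
      · exact hne (hb1.trans hb2.symm)
  -- the map to Lim1
  let F : (ℕ → Bool) → Lim1 u := fun ε => Quot.mk _ (xf ε)
  -- representatives
  let rep : Lim1 u → (ℕ → Bool) := fun c =>
    if h : ∃ ε, F ε = c then h.choose else (fun _ => false)
  have rep_spec : ∀ ε, F (rep (F ε)) = F ε := by
    intro ε
    have h : ∃ ε', F ε' = F ε := ⟨ε, rfl⟩
    show F (if h' : ∃ ε', F ε' = F ε then h'.choose else fun _ => false) = F ε
    rw [dif_pos h]
    exact h.choose_spec
  -- the translating element
  have hrel : ∀ ε : ℕ → Bool, ∃ a : A m,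
      ∀ k, (a * Qseq u m (xf ε) k)⁻¹ * Qseq u m (xf (rep (F ε))) k ∈ Bsub u m k := by
    intro ε
    have h : Quot.mk (lim1Rel u) (xf ε) = Quot.mk (lim1Rel u) (xf (rep (F ε))) :=
      (rep_spec ε).symm
    exact eqvGen_imp u m (Quot.eqvGen_exact h)
  let af : (ℕ → Bool) → A m := fun ε => (hrel ε).choose
  have af_spec : ∀ ε k,
      (af ε * Qseq u m (xf ε) k)⁻¹ * Qseq u m (xf (rep (F ε))) k ∈ Bsub u m k :=
    fun ε => (hrel ε).choose_spec
  -- injectivity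
  have inj : Function.Injective (fun ε => (F ε, af ε)) := by
    intro ε₁ ε₂ h
    have hF : F ε₁ = F ε₂ := congrArg Prod.fst h
    have ha : af ε₁ = af ε₂ := congrArg Prod.snd h
    apply sep
    intro k
    have h1 := af_spec ε₁ (nf k)
    have h2 := af_spec ε₂ (nf k)
    rw [hF] at h1
    rw [← ha] at h2
    have hmm := mul_mem h1 (inv_mem h2)
    have heq : (Qseq u m (xf ε₁) (nf k))⁻¹ * Qseq u m (xf ε₂) (nf k) =
        ((af ε₁ * Qseq u m (xf ε₁) (nf k))⁻¹ * Qseq u m (xf (rep (F ε₂))) (nf k)) *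
          ((af ε₁ * Qseq u m (xf ε₂) (nf k))⁻¹ * Qseq u m (xf (rep (F ε₂))) (nf k))⁻¹ := by
      group
    show (Qseq u m (xf ε₁) (nf k))⁻¹ * Qseq u m (xf ε₂) (nf k) ∈ Bsub u m (nf k)
    rw [heq]
    exact hmm
  -- contradiction with countability
  have hc2 : Countable (ℕ → Bool) := inj.countable
  have h0 := Cardinal.mk_le_aleph0_iff.mpr hc2
  have h1 : Cardinal.mk (ℕ → Bool) = 2 ^ Cardinal.aleph0 := by
    rw [Cardinal.mk_arrow, Cardinal.mk_bool, Cardinal.mk_nat]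
    norm_num
  rw [h1, ← Cardinal.continuum] at h0
  exact absurd h0 Cardinal.aleph0_lt_continuum.not_ge
end

section
/- Let A be a countable group and A ⊇ A_0 ⊇ A_1 ⊇ ⋯ a decreasing sequence of subgroups with infinitely many of the A_n distinct. Then lim¹ of the inverse system (A_n) (with inclusion transition maps) is uncountable. -/
section Aux

theorem lim1Rel_equivalence {A : ℕ → Type} [∀ n, Group (A n)] (u : ∀ n, A (n + 1) →* A n) :
    Equivalence (lim1Rel u) where
  refl x := ⟨fun _ => 1, fun n => by simp⟩
  symm := by
    rintro x y ⟨a, ha⟩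
    refine ⟨fun n => (a n)⁻¹, fun n => ?_⟩
    rw [ha n]
    simp [map_inv, mul_assoc]
  trans := by
    rintro x y z ⟨a, ha⟩ ⟨b, hb⟩
    refine ⟨fun n => b n * a n, fun n => ?_⟩
    rw [hb n, ha n]
    simp [map_mul, mul_assoc]

theorem not_countable_nat_bool : ¬ Countable (ℕ → Bool) := by
  intro h
  have : Countable (Set ℕ) :=
    Countable.of_equiv _ ((Equiv.arrowCongr (Equiv.refl ℕ) Equiv.propEquivBool).symm)
  obtain ⟨f, hf⟩ := Countable.exists_injective_nat (Set ℕ)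
  exact Function.cantor_injective f hf

open scoped Classical

variable {G : Type} [Group G] (S : ℕ → Subgroup G)

/-- The predicate picking out the indices of strict inclusions. -/
def sp (S : ℕ → Subgroup G) : ℕ → Prop := fun n => S (n + 1) < S n

/-- An element of `S (nth i)` not in `S (nth i + 1)`. -/
noncomputable def tt (i : ℕ) : G :=
  if h : sp S (Nat.nth (sp S) i) then (SetLike.exists_of_lt h).choose else 1

theorem tt_mem (hinf : (setOf (sp S)).Infinite) (i : ℕ) :
    tt S i ∈ S (Nat.nth (sp S) i) := by
  have h := Nat.nth_mem_of_infinite hinf i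
  rw [tt, dif_pos h]
  exact (SetLike.exists_of_lt h).choose_spec.1

theorem tt_notmem (hinf : (setOf (sp S)).Infinite) (i : ℕ) :
    tt S i ∉ S (Nat.nth (sp S) i + 1) := by
  have h := Nat.nth_mem_of_infinite hinf i
  rw [tt, dif_pos h]
  exact (SetLike.exists_of_lt h).choose_spec.2

/-- The `G`-valued sequence attached to a sign sequence `ε`. -/
noncomputable def ww (ε : ℕ → Bool) (n : ℕ) : G :=
  if sp S n then (if ε (Nat.count (sp S) n) then tt S (Nat.count (sp S) n) else 1) else 1

theorem ww_mem (hinf : (setOf (sp S)).Infinite) (ε : ℕ → Bool) (n : ℕ) :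
    ww S ε n ∈ S n := by
  unfold ww
  split_ifs with h h2
  · have := tt_mem S hinf (Nat.count (sp S) n)
    rwa [Nat.nth_count h] at this
  · exact one_mem _
  · exact one_mem _

/-- Partial products. -/
noncomputable def PP (ε : ℕ → Bool) : ℕ → G
  | 0 => 1
  | n + 1 => PP ε n * ww S ε n

theorem key_lemma (hinf : (setOf (sp S)).Infinite) {δ δ' : ℕ → Bool} {i : ℕ}
    (hag : ∀ j < i, δ j = δ' j) (hne : δ i ≠ δ' i) :
    (PP S δ (Nat.nth (sp S) i + 1))⁻¹ * PP S δ' (Nat.nth (sp S) i + 1)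
      ∉ S (Nat.nth (sp S) i + 1) := by
  set c := Nat.nth (sp S) i with hc_def
  have hpre : ∀ m, m ≤ c → PP S δ m = PP S δ' m := by
    intro m hm
    induction m with
    | zero => rfl
    | succ m ih =>
      have hmc : m < c := hm
      rw [PP, PP, ih hmc.le]
      congr 1
      unfold ww
      by_cases h : sp S m
      · have hcnt : Nat.count (sp S) m < i := by
          have h1 : Nat.nth (sp S) (Nat.count (sp S) m) = m := Nat.nth_count h
          have hlt : Nat.nth (sp S) (Nat.count (sp S) m) < Nat.nth (sp S) i := by
            rw [h1]; exact hmc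
          exact (Nat.nth_lt_nth hinf).mp hlt
        rw [if_pos h, if_pos h, hag _ hcnt]
      · rw [if_neg h, if_neg h]
  have hc : sp S c := Nat.nth_mem_of_infinite hinf i
  have hcount : Nat.count (sp S) c = i := Nat.count_nth (fun hf => absurd hf hinf)
  intro hmem
  rw [PP, PP, hpre c le_rfl] at hmem
  have hmem' : (ww S δ c)⁻¹ * ww S δ' c ∈ S (c + 1) := by
    convert hmem using 1
    group
  unfold ww at hmem'
  rw [if_pos hc, if_pos hc, hcount] at hmem'
  cases hdi : δ i <;> cases hdi' : δ' i
  · exact hne (by rw [hdi, hdi'])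
  · rw [hdi, hdi'] at hmem'
    simp only [if_false, if_true, Bool.false_eq_true, inv_one, one_mul] at hmem'
    exact tt_notmem S hinf i hmem'
  · rw [hdi, hdi'] at hmem'
    simp only [if_true, if_false, Bool.false_eq_true, mul_one] at hmem'
    exact tt_notmem S hinf i ((inv_mem_iff).mp hmem')
  · exact hne (by rw [hdi, hdi'])

theorem uniq_lemma (hinf : (setOf (sp S)).Infinite) (ε : ℕ → Bool) (g : G) {δ δ' : ℕ → Bool}
    (h1 : ∀ n, (PP S δ n)⁻¹ * g * PP S ε n ∈ S n)
    (h2 : ∀ n, (PP S δ' n)⁻¹ * g * PP S ε n ∈ S n) : δ = δ' := by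
  by_contra hne
  have hex : ∃ i, δ i ≠ δ' i := by
    by_contra h
    push_neg at h
    exact hne (funext h)
  set i := Nat.find hex with hi
  have hag : ∀ j < i, δ j = δ' j := fun j hj => not_not.mp (Nat.find_min hex hj)
  set n := Nat.nth (sp S) i + 1 with hn
  refine key_lemma S hinf hag (Nat.find_spec hex) ?_
  have hm := mul_mem (h1 n) (inv_mem (h2 n))
  convert hm using 1
  rw [hn]
  group

/-- The sequence in the inverse system attached to `ε`. -/
noncomputable def xx (hinf : (setOf (sp S)).Infinite) (ε : ℕ → Bool) : ∀ n, ↥(S n) :=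
  fun n => ⟨ww S ε n, ww_mem S hinf ε n⟩

theorem rel_to_g (hdec : ∀ n, S (n + 1) ≤ S n) (hinf : (setOf (sp S)).Infinite)
    {ε δ : ℕ → Bool}
    (h : lim1Rel (A := fun n => ↥(S n)) (fun n => Subgroup.inclusion (hdec n))
      (xx S hinf ε) (xx S hinf δ)) :
    ∃ g : G, ∀ n, (PP S δ n)⁻¹ * g * PP S ε n ∈ S n := by
  obtain ⟨a, ha⟩ := h
  refine ⟨(a 0 : G), fun n => ?_⟩
  have hco : ∀ n, ww S δ n = (a n : G) * ww S ε n * ((a (n + 1) : G))⁻¹ := by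
    intro n
    have := congrArg Subtype.val (ha n)
    simpa [xx] using this
  have hkey : ∀ n, PP S δ n * (a n : G) = (a 0 : G) * PP S ε n := by
    intro n
    induction n with
    | zero => simp [PP]
    | succ n ih =>
      rw [PP, PP, hco n]
      calc PP S δ n * ((a n : G) * ww S ε n * ((a (n + 1) : G))⁻¹) * (a (n + 1) : G)
          = (PP S δ n * (a n : G)) * ww S ε n := by group
        _ = ((a 0 : G) * PP S ε n) * ww S ε n := by rw [ih]
        _ = (a 0 : G) * (PP S ε n * ww S ε n) := by rw [mul_assoc]
  have := hkey n
  have heq : (PP S δ n)⁻¹ * (a 0 : G) * PP S ε n = (a n : G) := by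
    rw [mul_assoc, ← this]
    group
  rw [heq]
  exact (a n).2

end Aux

/-- Lemma i2: if `A` is a countable group and `A ⊇ A_0 ⊇ A_1 ⊇ ⋯` is a decreasing chain
of subgroups with infinitely many of the `A_n` distinct, then `lim¹` of the inverse system
`(A_n)` (with inclusions as transition maps) is uncountable. -/
theorem statement_2 {G : Type} [Group G] [Countable G] (S : ℕ → Subgroup G)
    (hdec : ∀ n, S (n + 1) ≤ S n) (hinf : {n | S (n + 1) < S n}.Infinite) :
    Uncountable (Lim1 (A := fun n => ↥(S n)) (fun n => Subgroup.inclusion (hdec n))) := by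
  classical
  have hinf' : (setOf (sp S)).Infinite := hinf
  by_contra hUC
  rw [not_uncountable_iff] at hUC
  set u : ∀ n, ↥(S (n + 1)) →* ↥(S n) := fun n => Subgroup.inclusion (hdec n) with hu
  haveI : Countable (Lim1 (A := fun n => ↥(S n)) u) := hUC
  have hequiv := lim1Rel_equivalence (A := fun n => ↥(S n)) u
  set F : (ℕ → Bool) → Lim1 (A := fun n => ↥(S n)) u := fun ε => Quot.mk _ (xx S hinf' ε) with hF
  set rep : Lim1 (A := fun n => ↥(S n)) u → (ℕ → Bool) :=
    fun q => if h : ∃ ε, F ε = q then h.choose else fun _ => false with hrepdef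
  have hrep : ∀ ε, F (rep (F ε)) = F ε := by
    intro ε
    have h : ∃ ε', F ε' = F ε := ⟨ε, rfl⟩
    simp only [hrepdef, dif_pos h]
    exact h.choose_spec
  have hrel : ∀ ε, lim1Rel (A := fun n => ↥(S n)) u (xx S hinf' (rep (F ε))) (xx S hinf' ε) := by
    intro ε
    exact hequiv.eqvGen_iff.mp (Quot.eqvGen_exact (hrep ε))
  choose g hg using fun ε => rel_to_g S hdec hinf' (hrel ε)
  have hinj : Function.Injective (fun ε => (F ε, g ε)) := by
    intro ε ε' h
    rw [Prod.mk.injEq] at h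
    obtain ⟨h1, h2⟩ := h
    have hr : rep (F ε) = rep (F ε') := by rw [h1]
    refine uniq_lemma S hinf' (rep (F ε)) (g ε) (hg ε) ?_
    rw [h2, hr]
    exact hg ε'
  exact not_countable_nat_bool hinj.countable
end
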